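/- For all integers b ≥ 0 and r ≥ 1, with g = 2b + r − 1: 2^(2b)·N_even = 2^(g−1)·(2^(g−2b) + 1) and 2^(2b)·N_odd = 2^(g−1)·(2^(g−2b) − 1), where N_even (resp. N_odd) is the number of subsets E of a 2r-element set R with |E| ≡ r (mod 2), counted up to the identification E ∼ R∖E, such that (r − |E|)/2 is even (resp. odd). -/

import Mathlib

open Finset
abbrev G := GaussianInt
def ii : G := ⟨0, 1⟩
def gre : G →+ ℤ := { toFun := Zsqrtd.re, map_zero' := rfl, map_add' := fun _ _ => rfl }

lemma pow_emod4 (z : G) (h : z ^ 4 = 1) (n : ℕ) : z ^ n = z ^ (n % 4) := by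
  conv_lhs => rw [← Nat.div_add_mod n 4, pow_add, pow_mul, h, one_pow, one_mul]

lemma w_eval (r k : ℕ) : (ii^r * (-ii)^k).re
    = (if k % 4 = r % 4 then 1 else 0) - (if k % 4 = (r+2) % 4 then 1 else 0) := by
  rw [pow_emod4 ii (by decide) r, pow_emod4 (-ii) (by decide) k,
    show (r+2) % 4 = (r % 4 + 2) % 4 by omega]
  have hr : r % 4 < 4 := Nat.mod_lt _ (by norm_num)
  have hk : k % 4 < 4 := Nat.mod_lt _ (by norm_num)
  set a := r % 4 with ha
  set b := k % 4 with hb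
  interval_cases a <;> interval_cases b <;> decide

lemma gauss_key (r : ℕ) :
    ∑ k ∈ range (2*r+1), (((2*r).choose k : ℤ) *
      ((if k % 4 = r % 4 then 1 else 0) - (if k % 4 = (r+2) % 4 then 1 else 0))) = 2^r := by
  have h2 : (-ii + 1)^(2*r) = ∑ k ∈ range (2*r+1), (-ii)^k * 1^(2*r-k) * ((2*r).choose k : G) :=
    add_pow _ _ _
  have h3 : (-ii + 1)^(2*r) = (-2*ii)^r := by
    rw [two_mul, pow_add, ← mul_pow]
    congr 1
  have h5 : ii^r * ∑ k ∈ range (2*r+1), (-ii)^k * 1^(2*r-k) * ((2*r).choose k : G) = 2^r := by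
    rw [← h2, h3, ← mul_pow]
    congr 1
  rw [Finset.mul_sum] at h5
  have h5' : ∑ k ∈ range (2*r+1), ((2*r).choose k : G) * (ii^r * (-ii)^k) = 2^r := by
    rw [← h5]
    exact Finset.sum_congr rfl fun k _ => by ring
  have h6 := congrArg gre h5'
  rw [map_sum] at h6
  have h7 : gre ((2:G)^r) = 2^r := by
    have h : ((2:G))^r = (((2:ℤ)^r : ℤ) : G) := by norm_cast
    show ((2:G)^r).re = 2^r
    rw [h, Zsqrtd.re_intCast]
  rw [h7] at h6
  rw [← h6]
  refine Finset.sum_congr rfl fun k _ => ?_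
  have : gre (((2*r).choose k : G) * (ii^r * (-ii)^k)) = ((2*r).choose k : ℤ) * (ii^r * (-ii)^k).re := by
    show (((2*r).choose k : G) * (ii^r * (-ii)^k)).re = _
    simp [gre, Zsqrtd.re_mul, Zsqrtd.re_natCast, Zsqrtd.im_natCast]
  rw [this, w_eval]

lemma count_by_card {α : Type*} [Fintype α] [DecidableEq α] (P : ℕ → Prop) [DecidablePred P] :
    ((Finset.univ : Finset α).powerset.filter (fun E => P E.card)).card
      = ∑ k ∈ range (Fintype.card α + 1), if P k then (Fintype.card α).choose k else 0 := by
  rw [Finset.card_eq_sum_card_fiberwise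
    (f := Finset.card) (t := range (Fintype.card α + 1))
    (fun E _ => by simp [Nat.lt_succ, Finset.card_le_univ])]
  refine Finset.sum_congr rfl fun k hk => ?_
  have h : ((Finset.univ : Finset α).powerset.filter (fun E => P E.card)).filter
      (fun E => E.card = k) = if P k then Finset.powersetCard k (Finset.univ : Finset α) else ∅ := by
    ext E
    split_ifs with h
    · simp only [Finset.mem_filter, Finset.mem_powerset, Finset.mem_powersetCard]
      constructor
      · rintro ⟨⟨h1, _⟩, h3⟩; exact ⟨h1, h3⟩
      · rintro ⟨h1, h2⟩; exact ⟨⟨h1, h2 ▸ h⟩, h2⟩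
    · simp only [Finset.mem_filter, Finset.mem_powerset, Finset.notMem_empty, iff_false]
      rintro ⟨⟨_, h2⟩, h3⟩; exact h (h3 ▸ h2)
  rw [h]
  split_ifs <;> simp [Finset.card_powersetCard]

lemma sum_halves (r : ℕ) (hr : 1 ≤ r) :
    2 * ((∑ k ∈ range (2*r+1), if k % 4 = r % 4 then ((2*r).choose k : ℤ) else 0)
       + (∑ k ∈ range (2*r+1), if k % 4 = (r+2) % 4 then ((2*r).choose k : ℤ) else 0))
      = 2^(2*r) := by
  rw [← Finset.sum_add_distrib, Finset.mul_sum]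
  have halt := Int.alternating_sum_range_choose (n := 2*r)
  rw [if_neg (by omega : ¬ 2*r = 0)] at halt
  have htot : ∑ k ∈ range (2*r+1), ((2*r).choose k : ℤ) = 2^(2*r) := by
    exact_mod_cast Nat.sum_range_choose (2*r)
  calc ∑ k ∈ range (2*r+1), 2 * ((if k % 4 = r % 4 then ((2*r).choose k : ℤ) else 0)
          + (if k % 4 = (r+2) % 4 then ((2*r).choose k : ℤ) else 0))
      = ∑ k ∈ range (2*r+1), (((2*r).choose k : ℤ) + (-1)^r * ((-1)^k * ((2*r).choose k : ℤ))) := by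
        refine Finset.sum_congr rfl fun k _ => ?_
        rcases Nat.even_or_odd r with hpr | hpr <;> rcases Nat.even_or_odd k with hpk | hpk <;>
          rw [hpr.neg_one_pow, hpk.neg_one_pow] <;>
          simp only [Nat.even_iff, Nat.odd_iff] at hpr hpk <;>
          split_ifs <;> ring_nf <;> omega
    _ = 2^(2*r) := by
        rw [Finset.sum_add_distrib, htot, ← Finset.mul_sum, halt, mul_zero, add_zero]


/-- Counting underlying Proposition 3(a): on a set `R` of cardinality `2r`, the number
`N_even` (resp. `N_odd`) of subsets `E` with `|E| ≡ r (mod 2)` and `(r−|E|)/2` even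
(resp. odd), counted up to the identification `E ∼ R∖E` (so each such subset is counted
with weight `1/2`, i.e. `2·N` is the plain count), satisfies
`2^(2b)·N_even = 2^(g−1)(2^(g−2b)+1)` and `2^(2b)·N_odd = 2^(g−1)(2^(g−2b)−1)`,
where `g = 2b + r − 1`. -/
theorem stmt_9 {α : Type*} [Fintype α] [DecidableEq α] (b r : ℕ) (hr : 1 ≤ r)
    (hcard : Fintype.card α = 2 * r) (g : ℤ) (hg : g = 2 * b + r - 1)
    (Neven Nodd : ℕ)
    (hNe : 2 * Neven = ((Finset.univ : Finset α).powerset.filter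
      (fun E => E.card % 2 = r % 2 ∧ Even (((r : ℤ) - E.card) / 2))).card)
    (hNo : 2 * Nodd = ((Finset.univ : Finset α).powerset.filter
      (fun E => E.card % 2 = r % 2 ∧ Odd (((r : ℤ) - E.card) / 2))).card) :
    (2 : ℚ) ^ (2 * b) * Neven = (2 : ℚ) ^ (g - 1) * ((2 : ℚ) ^ (g - 2 * b) + 1) ∧
    (2 : ℚ) ^ (2 * b) * Nodd = (2 : ℚ) ^ (g - 1) * ((2 : ℚ) ^ (g - 2 * b) - 1) := by
  subst hg
  -- rewrite the filters to mod-4 conditions on cardinality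
  have hNe' : 2 * Neven = ∑ k ∈ range (2*r+1), if k % 4 = r % 4 then (2*r).choose k else 0 := by
    rw [hNe, Finset.filter_congr (fun E _ => by
      rw [Int.even_iff]
      constructor <;> omega :
      ∀ E ∈ (Finset.univ : Finset α).powerset,
        ((E.card % 2 = r % 2 ∧ Even (((r : ℤ) - E.card) / 2)) ↔ E.card % 4 = r % 4)),
      count_by_card (fun k => k % 4 = r % 4), hcard]
  have hNo' : 2 * Nodd = ∑ k ∈ range (2*r+1), if k % 4 = (r+2) % 4 then (2*r).choose k else 0 := by
    rw [hNo, Finset.filter_congr (fun E _ => by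
      rw [Int.odd_iff]
      constructor <;> omega :
      ∀ E ∈ (Finset.univ : Finset α).powerset,
        ((E.card % 2 = r % 2 ∧ Odd (((r : ℤ) - E.card) / 2)) ↔ E.card % 4 = (r+2) % 4)),
      count_by_card (fun k => k % 4 = (r+2) % 4), hcard]
  -- integer versions
  have hAe : (2 * Neven : ℤ) = ∑ k ∈ range (2*r+1), if k % 4 = r % 4 then ((2*r).choose k : ℤ) else 0 := by
    exact_mod_cast hNe'
  have hAo : (2 * Nodd : ℤ) = ∑ k ∈ range (2*r+1), if k % 4 = (r+2) % 4 then ((2*r).choose k : ℤ) else 0 := by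
    exact_mod_cast hNo'
  have hD : (2 * Neven : ℤ) - (2 * Nodd : ℤ) = 2^r := by
    rw [hAe, hAo, ← Finset.sum_sub_distrib, ← gauss_key r]
    exact Finset.sum_congr rfl fun k _ => by split_ifs <;> ring
  have hS : 2 * ((2 * Neven : ℤ) + (2 * Nodd : ℤ)) = 2^(2*r) := by
    rw [hAe, hAo]; exact sum_halves r hr
  obtain ⟨s, rfl⟩ : ∃ s, r = s + 1 := ⟨r - 1, by omega⟩
  have hSum : (2 * Neven : ℤ) + (2 * Nodd : ℤ) = 2^(2*s+1) := by
    refine mul_left_cancel₀ (two_ne_zero) ?_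
    rw [hS]; ring
  have hqe : (Neven : ℚ) * 4 = 2^(2*s+1) + 2^(s+1) := by
    have h : (4 * Neven : ℤ) = 2^(2*s+1) + 2^(s+1) := by linarith [hD, hSum]
    have h2 := congrArg (fun z : ℤ => (z : ℚ)) h
    push_cast at h2
    linarith
  have hqo : (Nodd : ℚ) * 4 = 2^(2*s+1) - 2^(s+1) := by
    have h : (4 * Nodd : ℤ) = 2^(2*s+1) - 2^(s+1) := by linarith [hD, hSum]
    have h2 := congrArg (fun z : ℤ => (z : ℚ)) h
    push_cast at h2
    linarith
  have h4 : ((4:ℚ)) ≠ 0 := by norm_num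
  have he2 : (2:ℚ)^(2*(b:ℤ) + ((s+1:ℕ):ℤ) - 1 - 2*(b:ℤ)) = 2^(s:ℕ) := by
    rw [show 2*(b:ℤ) + ((s+1:ℕ):ℤ) - 1 - 2*(b:ℤ) = ((s:ℕ):ℤ) by push_cast; ring, zpow_natCast]
  have he1 : (2:ℚ)^(2*(b:ℤ) + ((s+1:ℕ):ℤ) - 1 - 1) * 4 = 2^(2*b+s+1) := by
    rw [show (4:ℚ) = (2:ℚ)^(2:ℤ) by norm_num, ← zpow_add₀ (two_ne_zero),
      show 2*(b:ℤ) + ((s+1:ℕ):ℤ) - 1 - 1 + 2 = ((2*b+s+1 : ℕ):ℤ) by push_cast; ring,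
      zpow_natCast]
  constructor
  · rw [he2]
    refine mul_right_cancel₀ h4 ?_
    rw [show ((2:ℚ)^(2*(b:ℤ) + ((s+1:ℕ):ℤ) - 1 - 1) * ((2:ℚ)^(s:ℕ) + 1)) * 4
        = ((2:ℚ)^(2*(b:ℤ) + ((s+1:ℕ):ℤ) - 1 - 1) * 4) * ((2:ℚ)^(s:ℕ) + 1) by ring,
      he1, show (2:ℚ)^(2*b) * ↑Neven * 4 = (2:ℚ)^(2*b) * ((Neven:ℚ) * 4) by ring, hqe]
    ring
  · rw [he2]
    refine mul_right_cancel₀ h4 ?_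
    rw [show ((2:ℚ)^(2*(b:ℤ) + ((s+1:ℕ):ℤ) - 1 - 1) * ((2:ℚ)^(s:ℕ) - 1)) * 4
        = ((2:ℚ)^(2*(b:ℤ) + ((s+1:ℕ):ℤ) - 1 - 1) * 4) * ((2:ℚ)^(s:ℕ) - 1) by ring,
      he1, show (2:ℚ)^(2*b) * ↑Nodd * 4 = (2:ℚ)^(2*b) * ((Nodd:ℚ) * 4) by ring, hqo]
    ring
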